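/- Let V, V₁, V₂, … ∈ L^∞([0,1]²) with ‖V‖_∞ ≤ C and ‖Vₙ‖_∞ ≤ C for all n, and W, W₁, W₂, … ∈ L¹([0,1]²). If Vₙ → V in the cut norm and Wₙ → W in L¹, then ⟨Vₙ,Wₙ⟩ → ⟨V,W⟩, where ⟨V,W⟩ = ∫_{[0,1]²} V(x,y)W(x,y)dxdy. -/

import Mathlib

open MeasureTheory Filter

/-- The cut norm of a kernel on `[0,1]²`. -/
noncomputable def cutNorm (W : ℝ → ℝ → ℝ) : ℝ :=
  sSup {r : ℝ | ∃ S T : Set ℝ, S ⊆ Set.Icc 0 1 ∧ T ⊆ Set.Icc 0 1 ∧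
    MeasurableSet S ∧ MeasurableSet T ∧
    r = |∫ x in S, ∫ y in T, W x y|}

/-- The square `[0,1]²`. -/
noncomputable def unitSq : Set (ℝ × ℝ) := Set.Icc 0 1 ×ˢ Set.Icc 0 1

namespace Stmt8Aux

open Set MeasurableSpace

lemma unitSq_meas : MeasurableSet unitSq := measurableSet_Icc.prod measurableSet_Icc

lemma unitSq_fin : volume unitSq ≠ ⊤ :=
  ((isCompact_Icc.prod isCompact_Icc).measure_lt_top).ne

/-- The restricted measure. -/
noncomputable def μ₀ : Measure (ℝ × ℝ) := volume.restrict unitSq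

instance : IsFiniteMeasure μ₀ :=
  ⟨by rw [μ₀, Measure.restrict_apply_univ]; exact unitSq_fin.lt_top⟩

lemma intOn {U : ℝ → ℝ → ℝ} {D : ℝ} (hm : Measurable fun p : ℝ × ℝ => U p.1 p.2)
    (hb : ∀ x y, |U x y| ≤ D) {s : Set (ℝ × ℝ)} (hs : volume s ≠ ⊤) :
    IntegrableOn (fun p : ℝ × ℝ => U p.1 p.2) s :=
  Measure.integrableOn_of_bounded hs hm.aestronglyMeasurable
    (ae_of_all _ fun p => by simpa [Real.norm_eq_abs] using hb p.1 p.2)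

lemma iterated_bound {U : ℝ → ℝ → ℝ} {D : ℝ}
    (hm : Measurable fun p : ℝ × ℝ => U p.1 p.2)
    (hb : ∀ x y, |U x y| ≤ D) {S T : Set ℝ}
    (hS : S ⊆ Icc 0 1) (hT : T ⊆ Icc 0 1) :
    |∫ x in S, ∫ y in T, U x y| ≤ D := by
  have hD : 0 ≤ D := le_trans (abs_nonneg _) (hb 0 0)
  have hTv : volume T ≤ 1 := by
    calc volume T ≤ volume (Icc (0:ℝ) 1) := measure_mono hT
    _ = 1 := by simp [Real.volume_Icc]
  have hSv : volume S ≤ 1 := by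
    calc volume S ≤ volume (Icc (0:ℝ) 1) := measure_mono hS
    _ = 1 := by simp [Real.volume_Icc]
  have hTfin : volume T < ⊤ := lt_of_le_of_lt hTv (by norm_num)
  have hSfin : volume S < ⊤ := lt_of_le_of_lt hSv (by norm_num)
  have inner : ∀ x, |∫ y in T, U x y| ≤ D := by
    intro x
    have hmx : Measurable fun y => U x y :=
      hm.comp (measurable_const.prodMk measurable_id)
    have h1 : |∫ y in T, U x y| ≤ D * (volume T).toReal :=
          norm_setIntegral_le_of_norm_le_const (f := fun y => U x y) hTfin
            (fun y _ => by simpa [Real.norm_eq_abs] using hb x y)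
    have h2 : (volume T).toReal ≤ 1 := by
      simpa using ENNReal.toReal_mono (by norm_num) hTv
    nlinarith
  have hgm : StronglyMeasurable fun x => ∫ y in T, U x y :=
    StronglyMeasurable.integral_prod_right (f := fun x y => U x y) hm.stronglyMeasurable
  have h1 : |∫ x in S, ∫ y in T, U x y| ≤ D * (volume S).toReal :=
        norm_setIntegral_le_of_norm_le_const (f := fun x => ∫ y in T, U x y) hSfin
          (fun x _ => by simpa [Real.norm_eq_abs] using inner x)
  have h2 : (volume S).toReal ≤ 1 := by
    simpa using ENNReal.toReal_mono (by norm_num) hSv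
  nlinarith

lemma le_cutNorm {U : ℝ → ℝ → ℝ} {D : ℝ}
    (hm : Measurable fun p : ℝ × ℝ => U p.1 p.2)
    (hb : ∀ x y, |U x y| ≤ D) {S T : Set ℝ}
    (hS : S ⊆ Icc 0 1) (hT : T ⊆ Icc 0 1)
    (hSm : MeasurableSet S) (hTm : MeasurableSet T) :
    |∫ x in S, ∫ y in T, U x y| ≤ cutNorm U := by
  apply le_csSup
  · exact ⟨D, fun r ⟨S', T', hS', hT', _, _, hr⟩ => hr ▸ iterated_bound hm hb hS' hT'⟩
  · exact ⟨S, T, hS, hT, hSm, hTm, rfl⟩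

end Stmt8Aux

namespace Stmt8Aux

open Set MeasurableSpace

/-- Rectangles in the plane with measurable sides. -/
def Rects : Set (Set (ℝ × ℝ)) :=
  Set.image2 (· ×ˢ ·) { s : Set ℝ | MeasurableSet s } { t : Set ℝ | MeasurableSet t }

/-- Indicators of measurable rectangles. -/
def RectInd : Set ((ℝ × ℝ) → ℝ) :=
  {f | ∃ S T : Set ℝ, MeasurableSet S ∧ MeasurableSet T ∧
    f = (S ×ˢ T).indicator (fun _ => (1 : ℝ))}

lemma span_mul {f g : (ℝ × ℝ) → ℝ} (hf : f ∈ Submodule.span ℝ RectInd)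
    (hg : g ∈ Submodule.span ℝ RectInd) : f * g ∈ Submodule.span ℝ RectInd := by
  induction hf, hg using Submodule.span_induction₂ with
  | mem_mem f g hf hg =>
    obtain ⟨S, T, hS, hT, rfl⟩ := hf
    obtain ⟨S', T', hS', hT', rfl⟩ := hg
    apply Submodule.subset_span
    refine ⟨S ∩ S', T ∩ T', hS.inter hS', hT.inter hT', ?_⟩
    funext p
    have := Set.inter_indicator_mul (s := S ×ˢ T) (t := S' ×ˢ T')
      (fun _ : ℝ × ℝ => (1:ℝ)) (fun _ : ℝ × ℝ => (1:ℝ)) p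
    simp only [mul_one] at this
    rw [Pi.mul_apply, ← this, Set.prod_inter_prod]
  | zero_left g hg => rw [zero_mul]; exact Submodule.zero_mem _
  | zero_right f hf => rw [mul_zero]; exact Submodule.zero_mem _
  | add_left f₁ f₂ g _ _ _ h1 h2 => rw [add_mul]; exact Submodule.add_mem _ h1 h2
  | add_right f g₁ g₂ _ _ _ h1 h2 => rw [mul_add]; exact Submodule.add_mem _ h1 h2
  | smul_left c f g _ _ h => rw [smul_mul_assoc]; exact Submodule.smul_mem _ _ h
  | smul_right c f g _ _ h => rw [mul_smul_comm]; exact Submodule.smul_mem _ _ h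

lemma algebra_ind_mem {t : Set (ℝ × ℝ)} (ht : t ∈ generateSetAlgebra Rects) :
    t.indicator (fun _ => (1 : ℝ)) ∈ Submodule.span ℝ RectInd := by
  induction ht with
  | base s hs =>
    obtain ⟨S, hS, T, hT, rfl⟩ := hs
    exact Submodule.subset_span ⟨S, T, hS, hT, rfl⟩
  | empty => rw [Set.indicator_empty]; exact Submodule.zero_mem _
  | compl s _ ih =>
    have huniv : (Set.univ : Set (ℝ × ℝ)).indicator (fun _ => (1:ℝ))
        ∈ Submodule.span ℝ RectInd :=
      Submodule.subset_span ⟨Set.univ, Set.univ, MeasurableSet.univ, MeasurableSet.univ,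
        by rw [Set.univ_prod_univ]⟩
    have : sᶜ.indicator (fun _ => (1:ℝ))
        = (Set.univ : Set (ℝ × ℝ)).indicator (fun _ => (1:ℝ)) - s.indicator (fun _ => (1:ℝ)) := by
      funext p; by_cases hp : p ∈ s <;> simp [hp]
    rw [this]
    exact Submodule.sub_mem _ huniv ih
  | union s u _ _ ihs ihu =>
    have : (s ∪ u).indicator (fun _ => (1:ℝ))
        = s.indicator (fun _ => (1:ℝ)) + u.indicator (fun _ => (1:ℝ))
          - s.indicator (fun _ => (1:ℝ)) * u.indicator (fun _ => (1:ℝ)) := by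
      funext p
      by_cases hs : p ∈ s <;> by_cases hu : p ∈ u <;> simp [hs, hu]
    rw [this]
    exact Submodule.sub_mem _ (Submodule.add_mem _ ihs ihu) (span_mul ihs ihu)

end Stmt8Aux

namespace Stmt8Aux

open Set MeasurableSpace

section Tendsto

variable {U : ℕ → ℝ → ℝ → ℝ} {D : ℝ}

lemma rect_tendsto (hm : ∀ n, Measurable fun p : ℝ × ℝ => U n p.1 p.2)
    (hb : ∀ n x y, |U n x y| ≤ D)
    (hcut : Tendsto (fun n => cutNorm (U n)) atTop (nhds 0))
    {S T : Set ℝ} (hSm : MeasurableSet S) (hTm : MeasurableSet T) :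
    Tendsto (fun n => ∫ p in unitSq, U n p.1 p.2 * (S ×ˢ T).indicator (fun _ => (1:ℝ)) p)
      atTop (nhds 0) := by
  have key : ∀ n, ∫ p in unitSq, U n p.1 p.2 * (S ×ˢ T).indicator (fun _ => (1:ℝ)) p
      = ∫ x in S ∩ Icc 0 1, ∫ y in T ∩ Icc 0 1, U n x y := by
    intro n
    have e1 : ∀ p : ℝ × ℝ, U n p.1 p.2 * (S ×ˢ T).indicator (fun _ => (1:ℝ)) p
        = (S ×ˢ T).indicator (fun p : ℝ × ℝ => U n p.1 p.2) p := by
      intro p; by_cases hp : p ∈ S ×ˢ T <;> simp [hp]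
    rw [integral_congr_ae (ae_of_all _ e1), integral_indicator (hSm.prod hTm),
      Measure.restrict_restrict (hSm.prod hTm),
      show S ×ˢ T ∩ unitSq = (S ∩ Icc 0 1) ×ˢ (T ∩ Icc 0 1) from by
        rw [unitSq]; exact Set.prod_inter_prod]
    have hsub : (S ∩ Icc 0 1) ×ˢ (T ∩ Icc 0 1) ⊆ unitSq := by
      rw [unitSq]; exact Set.prod_mono inter_subset_right inter_subset_right
    have hfin : volume ((S ∩ Icc 0 1) ×ˢ (T ∩ Icc 0 1)) ≠ ⊤ :=
      (lt_of_le_of_lt (measure_mono hsub) unitSq_fin.lt_top).ne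
    have hint : IntegrableOn (fun p : ℝ × ℝ => U n p.1 p.2)
        ((S ∩ Icc 0 1) ×ˢ (T ∩ Icc 0 1)) (volume.prod volume) := by
      rw [← Measure.volume_eq_prod ℝ ℝ]
      exact intOn (hm n) (hb n) hfin
    rw [show (volume : Measure (ℝ × ℝ)) = volume.prod volume from Measure.volume_eq_prod ℝ ℝ]
    exact setIntegral_prod _ hint
  apply squeeze_zero_norm _ hcut
  intro n
  rw [key n, Real.norm_eq_abs]
  exact le_cutNorm (hm n) (hb n) inter_subset_right inter_subset_right
    (hSm.inter measurableSet_Icc) (hTm.inter measurableSet_Icc)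

instance : IsFiniteMeasure (volume.restrict unitSq) :=
  ⟨by rw [Measure.restrict_apply_univ]; exact unitSq_fin.lt_top⟩

lemma mulInt (hm : ∀ n, Measurable fun p : ℝ × ℝ => U n p.1 p.2)
    (hb : ∀ n x y, |U n x y| ≤ D) (n : ℕ) {f : (ℝ × ℝ) → ℝ}
    (hf : Integrable f (volume.restrict unitSq)) :
    Integrable (fun p : ℝ × ℝ => U n p.1 p.2 * f p) (volume.restrict unitSq) :=
  hf.bdd_mul ((hm n).aestronglyMeasurable.restrict)
    (ae_of_all _ fun p => by simpa [Real.norm_eq_abs] using hb n p.1 p.2)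

lemma span_tendsto (hm : ∀ n, Measurable fun p : ℝ × ℝ => U n p.1 p.2)
    (hb : ∀ n x y, |U n x y| ≤ D)
    (hcut : Tendsto (fun n => cutNorm (U n)) atTop (nhds 0))
    {f : (ℝ × ℝ) → ℝ} (hf : f ∈ Submodule.span ℝ RectInd) :
    Integrable f (volume.restrict unitSq) ∧
      Tendsto (fun n => ∫ p in unitSq, U n p.1 p.2 * f p) atTop (nhds 0) := by
  induction hf using Submodule.span_induction with
  | mem f hf =>
    obtain ⟨S, T, hS, hT, rfl⟩ := hf
    constructor
    · exact (integrable_const (1:ℝ)).indicator (hS.prod hT)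
    · exact rect_tendsto hm hb hcut hS hT
  | zero =>
    refine ⟨integrable_zero _ _ _, ?_⟩
    simp only [mul_zero, Pi.zero_apply, integral_zero]
    exact tendsto_const_nhds
  | add f g hfs hgs ihf ihg =>
    refine ⟨ihf.1.add ihg.1, ?_⟩
    have e : ∀ n, ∫ p in unitSq, U n p.1 p.2 * (f + g) p
        = (∫ p in unitSq, U n p.1 p.2 * f p) + ∫ p in unitSq, U n p.1 p.2 * g p := by
      intro n
      rw [← integral_add (mulInt hm hb n ihf.1) (mulInt hm hb n ihg.1)]
      apply integral_congr_ae (ae_of_all _ fun p => ?_)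
      simp [mul_add]
    simp_rw [e]
    simpa using ihf.2.add ihg.2
  | smul c f hfs ihf =>
    refine ⟨ihf.1.smul c, ?_⟩
    have e : ∀ n, ∫ p in unitSq, U n p.1 p.2 * (c • f) p
        = c * ∫ p in unitSq, U n p.1 p.2 * f p := by
      intro n
      rw [← integral_const_mul]
      apply integral_congr_ae (ae_of_all _ fun p => ?_)
      simp; ring
    simp_rw [e]
    simpa using ihf.2.const_mul c

end Tendsto

end Stmt8Aux

namespace Stmt8Aux

open Set MeasurableSpace

open scoped symmDiff

section Main

variable {U : ℕ → ℝ → ℝ → ℝ} {D : ℝ}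

lemma ind_tendsto (hm : ∀ n, Measurable fun p : ℝ × ℝ => U n p.1 p.2)
    (hb : ∀ n x y, |U n x y| ≤ D)
    (hcut : Tendsto (fun n => cutNorm (U n)) atTop (nhds 0))
    {s : Set (ℝ × ℝ)} (hs : MeasurableSet s) :
    Tendsto (fun n => ∫ p in unitSq, U n p.1 p.2 * s.indicator (fun _ => (1:ℝ)) p)
      atTop (nhds 0) := by
  have hD : 0 ≤ D := le_trans (abs_nonneg _) (hb 0 0 0)
  have hgen : (inferInstance : MeasurableSpace (ℝ × ℝ))
      = generateFrom (generateSetAlgebra Rects) := by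
    rw [generateFrom_generateSetAlgebra_eq]
    exact generateFrom_prod.symm
  have MD : (volume.restrict unitSq).MeasureDense (generateSetAlgebra Rects) :=
    Measure.MeasureDense.of_generateFrom_isSetAlgebra_finite
      _ isSetAlgebra_generateSetAlgebra hgen
  rw [Metric.tendsto_atTop]
  intro ε hε
  set ε' := ε / (2 * (D + 1)) with hε'def
  have hε'pos : 0 < ε' := by rw [hε'def]; positivity
  obtain ⟨t, ht, hst⟩ := MD.approx s hs (measure_ne_top _ s) ε' hε'pos
  have htmeas : MeasurableSet t := MD.measurable t ht
  have htT := (span_tendsto hm hb hcut (algebra_ind_mem ht)).2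
  rw [Metric.tendsto_atTop] at htT
  obtain ⟨N, hN⟩ := htT (ε / 2) (by positivity)
  refine ⟨N, fun n hn => ?_⟩
  have hInt_s : Integrable (fun p : ℝ × ℝ => U n p.1 p.2 * s.indicator (fun _ => (1:ℝ)) p)
      (volume.restrict unitSq) := mulInt hm hb n ((integrable_const (1:ℝ)).indicator hs)
  have hInt_t : Integrable (fun p : ℝ × ℝ => U n p.1 p.2 * t.indicator (fun _ => (1:ℝ)) p)
      (volume.restrict unitSq) := mulInt hm hb n ((integrable_const (1:ℝ)).indicator htmeas)
  have hb2 : ∀ p : ℝ × ℝ,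
      ‖U n p.1 p.2 * s.indicator (fun _ => (1:ℝ)) p
        - U n p.1 p.2 * t.indicator (fun _ => (1:ℝ)) p‖
      ≤ D * (s ∆ t).indicator (fun _ => (1:ℝ)) p := by
    intro p
    rw [Real.norm_eq_abs, ← mul_sub, abs_mul]
    have h1 : |s.indicator (fun _ => (1:ℝ)) p - t.indicator (fun _ => (1:ℝ)) p|
        = (s ∆ t).indicator (fun _ => (1:ℝ)) p := by
      by_cases hps : p ∈ s <;> by_cases hpt : p ∈ t <;>
        simp [hps, hpt, Set.indicator_apply, Set.mem_symmDiff]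
    calc |U n p.1 p.2| * |s.indicator (fun _ => (1:ℝ)) p - t.indicator (fun _ => (1:ℝ)) p|
        ≤ D * |s.indicator (fun _ => (1:ℝ)) p - t.indicator (fun _ => (1:ℝ)) p| :=
          mul_le_mul_of_nonneg_right (hb n p.1 p.2) (abs_nonneg _)
    _ = D * (s ∆ t).indicator (fun _ => (1:ℝ)) p := by rw [h1]
  have hgint : Integrable (fun p : ℝ × ℝ => D * (s ∆ t).indicator (fun _ => (1:ℝ)) p)
      (volume.restrict unitSq) :=
    ((integrable_const (1:ℝ)).indicator (hs.symmDiff htmeas)).const_mul D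
  have htr : ((volume.restrict unitSq) (s ∆ t)).toReal < ε' := by
    have h1 : ((volume.restrict unitSq) (s ∆ t)).toReal < (ENNReal.ofReal ε').toReal :=
      ENNReal.toReal_strict_mono ENNReal.ofReal_ne_top hst
    rwa [ENNReal.toReal_ofReal hε'pos.le] at h1
  have hdiff : |(∫ p in unitSq, U n p.1 p.2 * s.indicator (fun _ => (1:ℝ)) p)
      - ∫ p in unitSq, U n p.1 p.2 * t.indicator (fun _ => (1:ℝ)) p| ≤ D * ε' := by
    rw [← integral_sub hInt_s hInt_t]
    calc |∫ p in unitSq, (U n p.1 p.2 * s.indicator (fun _ => (1:ℝ)) p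
          - U n p.1 p.2 * t.indicator (fun _ => (1:ℝ)) p)|
        ≤ ∫ p in unitSq, D * (s ∆ t).indicator (fun _ => (1:ℝ)) p := by
          rw [← Real.norm_eq_abs]
          exact norm_integral_le_of_norm_le hgint (ae_of_all _ hb2)
    _ = D * ((volume.restrict unitSq) (s ∆ t)).toReal := by
          rw [integral_const_mul, integral_indicator_const _ (hs.symmDiff htmeas)]
          simp [smul_eq_mul, measureReal_def]
    _ ≤ D * ε' := mul_le_mul_of_nonneg_left htr.le hD
  have hNn := hN n hn
  rw [Real.dist_eq, sub_zero] at hNn ⊢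
  have habs : |∫ p in unitSq, U n p.1 p.2 * s.indicator (fun _ => (1:ℝ)) p|
      ≤ D * ε' + |∫ p in unitSq, U n p.1 p.2 * t.indicator (fun _ => (1:ℝ)) p| := by
    have := abs_sub_abs_le_abs_sub
      (∫ p in unitSq, U n p.1 p.2 * s.indicator (fun _ => (1:ℝ)) p)
      (∫ p in unitSq, U n p.1 p.2 * t.indicator (fun _ => (1:ℝ)) p)
    nlinarith [hdiff]
  have hDe : D * ε' ≤ ε / 2 := by
    rw [hε'def, mul_div_assoc', div_le_div_iff₀ (by positivity) (by norm_num)]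
    nlinarith
  nlinarith [habs, hNn, hDe]

lemma integrable_tendsto (hm : ∀ n, Measurable fun p : ℝ × ℝ => U n p.1 p.2)
    (hb : ∀ n x y, |U n x y| ≤ D)
    (hcut : Tendsto (fun n => cutNorm (U n)) atTop (nhds 0))
    {f : (ℝ × ℝ) → ℝ} (hf : Integrable f (volume.restrict unitSq)) :
    Tendsto (fun n => ∫ p in unitSq, U n p.1 p.2 * f p) atTop (nhds 0) := by
  have hD : 0 ≤ D := le_trans (abs_nonneg _) (hb 0 0 0)
  refine Integrable.induction
    (P := fun f : (ℝ × ℝ) → ℝ =>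
      Tendsto (fun n => ∫ p in unitSq, U n p.1 p.2 * f p) atTop (nhds 0))
    ?_ ?_ ?_ ?_ hf
  · intro c s hsm _
    have e : ∀ n, ∫ p in unitSq, U n p.1 p.2 * s.indicator (fun _ => c) p
        = c * ∫ p in unitSq, U n p.1 p.2 * s.indicator (fun _ => (1:ℝ)) p := by
      intro n
      rw [← integral_const_mul]
      apply integral_congr_ae (ae_of_all _ fun p => ?_)
      by_cases hp : p ∈ s <;> simp [hp, mul_comm]
    simp_rw [e]
    simpa using (ind_tendsto hm hb hcut hsm).const_mul c
  · intro f g _ hfi hgi hPf hPg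
    have e : ∀ n, ∫ p in unitSq, U n p.1 p.2 * (f + g) p
        = (∫ p in unitSq, U n p.1 p.2 * f p) + ∫ p in unitSq, U n p.1 p.2 * g p := by
      intro n
      rw [← integral_add (mulInt hm hb n hfi) (mulInt hm hb n hgi)]
      apply integral_congr_ae (ae_of_all _ fun p => ?_)
      simp [mul_add]
    simp_rw [e]
    simpa using hPf.add hPg
  · apply isClosed_of_closure_subset
    intro F hF
    show Tendsto (fun n => ∫ p in unitSq, U n p.1 p.2 * (F : (ℝ × ℝ) → ℝ) p) atTop (nhds 0)
    rw [Metric.tendsto_atTop]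
    intro ε hε
    have hε2 : 0 < ε / (2 * (D + 1)) := by positivity
    obtain ⟨G, hG, hdistFG⟩ := Metric.mem_closure_iff.1 hF _ hε2
    have hG' : Tendsto (fun n => ∫ p in unitSq, U n p.1 p.2 * (G : (ℝ × ℝ) → ℝ) p)
        atTop (nhds 0) := hG
    rw [Metric.tendsto_atTop] at hG'
    obtain ⟨N, hN⟩ := hG' (ε / 2) (by positivity)
    refine ⟨N, fun n hn => ?_⟩
    have hFi : Integrable (F : (ℝ × ℝ) → ℝ) (volume.restrict unitSq) := L1.integrable_coeFn F
    have hGi : Integrable (G : (ℝ × ℝ) → ℝ) (volume.restrict unitSq) := L1.integrable_coeFn G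
    have hgint : Integrable (fun p : ℝ × ℝ => D * |F p - G p|) (volume.restrict unitSq) :=
      ((hFi.sub hGi).abs.const_mul D)
    have hdiff : |(∫ p in unitSq, U n p.1 p.2 * F p) - ∫ p in unitSq, U n p.1 p.2 * G p|
        ≤ D * dist F G := by
      rw [← integral_sub (mulInt hm hb n hFi) (mulInt hm hb n hGi)]
      calc |∫ p in unitSq, (U n p.1 p.2 * F p - U n p.1 p.2 * G p)|
          ≤ ∫ p in unitSq, D * |F p - G p| := by
            rw [← Real.norm_eq_abs]
            apply norm_integral_le_of_norm_le hgint (ae_of_all _ fun p => ?_)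
            rw [Real.norm_eq_abs, ← mul_sub, abs_mul]
            exact mul_le_mul_of_nonneg_right (hb n p.1 p.2) (abs_nonneg _)
      _ = D * ∫ p in unitSq, |F p - G p| := integral_const_mul _ _
      _ = D * dist F G := by
            have hde : dist F G = ∫ p in unitSq, |(F : (ℝ × ℝ) → ℝ) p - G p| := by
              rw [L1.dist_eq_integral_dist]
              exact integral_congr_ae (ae_of_all _ fun p => Real.dist_eq _ _)
            rw [hde]
    have hNn := hN n hn
    rw [Real.dist_eq, sub_zero] at hNn ⊢
    have habs : |∫ p in unitSq, U n p.1 p.2 * F p|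
        ≤ D * dist F G + |∫ p in unitSq, U n p.1 p.2 * G p| := by
      have := abs_sub_abs_le_abs_sub
        (∫ p in unitSq, U n p.1 p.2 * F p) (∫ p in unitSq, U n p.1 p.2 * G p)
      nlinarith [hdiff]
    have hDe : D * dist F G ≤ ε / 2 := by
      have h1 : D * dist F G ≤ D * (ε / (2 * (D + 1))) :=
        mul_le_mul_of_nonneg_left hdistFG.le hD
      have h2 : D * (ε / (2 * (D + 1))) ≤ ε / 2 := by
        rw [mul_div_assoc', div_le_div_iff₀ (by positivity) (by norm_num)]
        nlinarith
      linarith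
    nlinarith [habs, hNn, hDe]
  · intro f g hfg hfi hPf
    have e : (fun n => ∫ p in unitSq, U n p.1 p.2 * f p)
        = fun n => ∫ p in unitSq, U n p.1 p.2 * g p := by
      funext n
      apply integral_congr_ae (hfg.mono fun p hp => ?_)
      rw [hp]
    rwa [e] at hPf

end Main

end Stmt8Aux

theorem stmt8 (V : ℝ → ℝ → ℝ) (Vn : ℕ → ℝ → ℝ → ℝ)
    (W : ℝ → ℝ → ℝ) (Wn : ℕ → ℝ → ℝ → ℝ) (C : ℝ)
    (hVmeas : Measurable fun p : ℝ × ℝ => V p.1 p.2)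
    (hVnmeas : ∀ n, Measurable fun p : ℝ × ℝ => Vn n p.1 p.2)
    (hVC : ∀ x y, |V x y| ≤ C)
    (hVnC : ∀ n x y, |Vn n x y| ≤ C)
    (hWint : IntegrableOn (fun p : ℝ × ℝ => W p.1 p.2) unitSq)
    (hWnint : ∀ n, IntegrableOn (fun p : ℝ × ℝ => Wn n p.1 p.2) unitSq)
    (hVconv : Tendsto (fun n => cutNorm (fun x y => Vn n x y - V x y)) atTop (nhds 0))
    (hWconv : Tendsto (fun n => ∫ p in unitSq, |Wn n p.1 p.2 - W p.1 p.2|) atTop (nhds 0)) :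
    Tendsto (fun n => ∫ p in unitSq, Vn n p.1 p.2 * Wn n p.1 p.2) atTop
      (nhds (∫ p in unitSq, V p.1 p.2 * W p.1 p.2)) := by
  classical
  have hC : 0 ≤ C := le_trans (abs_nonneg _) (hVC 0 0)
  set U : ℕ → ℝ → ℝ → ℝ := fun n x y => Vn n x y - V x y with hUdef
  have hUm : ∀ n, Measurable fun p : ℝ × ℝ => U n p.1 p.2 :=
    fun n => (hVnmeas n).sub hVmeas
  have hUb : ∀ n x y, |U n x y| ≤ 2 * C := by
    intro n x y
    have h1 : |Vn n x y - V x y| ≤ |Vn n x y| + |V x y| := by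
      rw [sub_eq_add_neg]
      exact (abs_add_le _ _).trans (by rw [abs_neg])
    have := hVnC n x y
    have := hVC x y
    simp only [hUdef]
    nlinarith
  have hterm2 : Tendsto (fun n => ∫ p in unitSq, U n p.1 p.2 * W p.1 p.2)
      atTop (nhds 0) :=
    Stmt8Aux.integrable_tendsto hUm hUb hVconv hWint
  have hterm1 : Tendsto
      (fun n => ∫ p in unitSq, Vn n p.1 p.2 * (Wn n p.1 p.2 - W p.1 p.2))
      atTop (nhds 0) := by
    have hbound : ∀ n, ‖∫ p in unitSq, Vn n p.1 p.2 * (Wn n p.1 p.2 - W p.1 p.2)‖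
        ≤ C * ∫ p in unitSq, |Wn n p.1 p.2 - W p.1 p.2| := by
      intro n
      rw [Real.norm_eq_abs]
      have hint : Integrable (fun p : ℝ × ℝ => C * |Wn n p.1 p.2 - W p.1 p.2|)
          (volume.restrict unitSq) := (((hWnint n).sub hWint).abs.const_mul C)
      calc |∫ p in unitSq, Vn n p.1 p.2 * (Wn n p.1 p.2 - W p.1 p.2)|
          ≤ ∫ p in unitSq, C * |Wn n p.1 p.2 - W p.1 p.2| := by
            rw [← Real.norm_eq_abs]
            apply norm_integral_le_of_norm_le hint (ae_of_all _ fun p => ?_)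
            rw [Real.norm_eq_abs, abs_mul]
            exact mul_le_mul_of_nonneg_right (hVnC n p.1 p.2) (abs_nonneg _)
      _ = C * ∫ p in unitSq, |Wn n p.1 p.2 - W p.1 p.2| := integral_const_mul _ _
    exact squeeze_zero_norm hbound (by simpa using hWconv.const_mul C)
  have hdecomp : ∀ n, ∫ p in unitSq, Vn n p.1 p.2 * Wn n p.1 p.2
      = ((∫ p in unitSq, Vn n p.1 p.2 * (Wn n p.1 p.2 - W p.1 p.2))
        + ∫ p in unitSq, U n p.1 p.2 * W p.1 p.2)
        + ∫ p in unitSq, V p.1 p.2 * W p.1 p.2 := by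
    intro n
    have i1 : Integrable (fun p : ℝ × ℝ => Vn n p.1 p.2 * (Wn n p.1 p.2 - W p.1 p.2))
        (volume.restrict unitSq) :=
      ((hWnint n).sub hWint).bdd_mul (hVnmeas n).aestronglyMeasurable.restrict
        (ae_of_all _ fun p => by simpa [Real.norm_eq_abs] using hVnC n p.1 p.2)
    have i2 : Integrable (fun p : ℝ × ℝ => U n p.1 p.2 * W p.1 p.2)
        (volume.restrict unitSq) :=
      hWint.bdd_mul (hUm n).aestronglyMeasurable.restrict
        (ae_of_all _ fun p => by simpa [Real.norm_eq_abs] using hUb n p.1 p.2)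
    have i3 : Integrable (fun p : ℝ × ℝ => V p.1 p.2 * W p.1 p.2)
        (volume.restrict unitSq) :=
      hWint.bdd_mul hVmeas.aestronglyMeasurable.restrict
        (ae_of_all _ fun p => by simpa [Real.norm_eq_abs] using hVC p.1 p.2)
    have e : ∫ p in unitSq, Vn n p.1 p.2 * Wn n p.1 p.2
        = ∫ p in unitSq, (Vn n p.1 p.2 * (Wn n p.1 p.2 - W p.1 p.2)
            + U n p.1 p.2 * W p.1 p.2 + V p.1 p.2 * W p.1 p.2) :=
      integral_congr_ae (ae_of_all _ fun p => by simp only [hUdef]; ring)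
    have e3 : ∫ p in unitSq, (Vn n p.1 p.2 * (Wn n p.1 p.2 - W p.1 p.2)
          + U n p.1 p.2 * W p.1 p.2 + V p.1 p.2 * W p.1 p.2)
        = (∫ p in unitSq, (Vn n p.1 p.2 * (Wn n p.1 p.2 - W p.1 p.2)
            + U n p.1 p.2 * W p.1 p.2)) + ∫ p in unitSq, V p.1 p.2 * W p.1 p.2 :=
      integral_add (i1.add i2) i3
    have e2 : ∫ p in unitSq, (Vn n p.1 p.2 * (Wn n p.1 p.2 - W p.1 p.2)
          + U n p.1 p.2 * W p.1 p.2)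
        = (∫ p in unitSq, Vn n p.1 p.2 * (Wn n p.1 p.2 - W p.1 p.2))
            + ∫ p in unitSq, U n p.1 p.2 * W p.1 p.2 :=
      integral_add i1 i2
    rw [e, e3, e2]
  have hsum := (hterm1.add hterm2).add_const (∫ p in unitSq, V p.1 p.2 * W p.1 p.2)
  rw [add_zero, zero_add] at hsum
  have heq : (fun n => ∫ p in unitSq, Vn n p.1 p.2 * Wn n p.1 p.2)
      = fun n => ((∫ p in unitSq, Vn n p.1 p.2 * (Wn n p.1 p.2 - W p.1 p.2))
        + ∫ p in unitSq, U n p.1 p.2 * W p.1 p.2)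
        + ∫ p in unitSq, V p.1 p.2 * W p.1 p.2 := funext hdecomp
  rw [heq]
  exact hsum
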